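/- If a coalgebra H over a commutative ring R has a structural basis {Z_α : α ∈ ℤ_{≥0}^{(I)}}, then the R-module of primitive elements of H is free with basis the elements Z_{ε_i} for i ∈ I, where ε_i is the indicator function of i. -/

import Mathlib

open TensorProduct Coalgebra

/-- Lemma 2.4: if a coalgebra `H` over `R` has a structural basis `{Z_α}` (indexed by
finitely supported functions `α : I → ℕ`, with `Δ(Z_α) = ∑_{β ≤ α} Z_β ⊗ Z_{α-β}` and
`ε(Z_α) = δ_{α,0}`), then the `R`-module of primitive elements is free with basis the
elements `Z_{ε_i}`, `i ∈ I` (primitivity is with respect to the group-like element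
`Z_0`, which plays the role of `1`). -/
theorem primitives_of_structural_basis
    (R H I : Type*) [DecidableEq I] [CommRing R] [AddCommGroup H] [Module R H] [Coalgebra R H]
    (Z : Module.Basis (I →₀ ℕ) R H)
    (hZ : ∀ α : I →₀ ℕ,
      comul (R := R) (Z α) = ∑ p ∈ Finset.HasAntidiagonal.antidiagonal α, Z p.1 ⊗ₜ[R] Z p.2)
    (hZc : ∀ α : I →₀ ℕ, counit (R := R) (Z α) = if α = 0 then 1 else 0) :
    (∀ i : I, comul (R := R) (Z (Finsupp.single i 1))
        = Z (Finsupp.single i 1) ⊗ₜ[R] Z 0 + Z 0 ⊗ₜ[R] Z (Finsupp.single i 1)) ∧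
    LinearIndependent R (fun i : I => Z (Finsupp.single i 1)) ∧
    ∀ x : H, comul (R := R) x = x ⊗ₜ[R] Z 0 + Z 0 ⊗ₜ[R] x →
      x ∈ Submodule.span R (Set.range fun i : I => Z (Finsupp.single i 1)) := by
  refine ⟨?_, ?_, ?_⟩
  · intro i
    rw [hZ, Finsupp.antidiagonal_single, show (1:ℕ) = 0 + 1 by rfl, Finset.Nat.antidiagonal_succ]
    simp [Finset.sum_map, Prod.map, add_comm]
  · exact Z.linearIndependent.comp _ (Finsupp.single_left_injective one_ne_zero)
  · intro x hx
    set B := Z.tensorProduct Z with hB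
    set c := Z.repr x with hcdef
    have keyA : ∀ (α β γ : I →₀ ℕ),
        B.repr (comul (R := R) (Z α)) (β, γ) = if β + γ = α then 1 else 0 := by
      intro α β γ
      rw [hZ, map_sum]
      simp only [hB, ← Module.Basis.tensorProduct_apply, Module.Basis.repr_self,
        Finsupp.coe_finset_sum, Finset.sum_apply, Finsupp.single_apply]
      rw [Finset.sum_ite_eq' (Finset.HasAntidiagonal.antidiagonal α) ((β, γ) : (I →₀ ℕ) × (I →₀ ℕ))
        (fun _ => (1 : R))]
      simp [Finset.mem_antidiagonal]
    have key : ∀ β γ : I →₀ ℕ, B.repr (comul (R := R) x) (β, γ) = c (β + γ) := by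
      intro β γ
      rw [show comul (R := R) x = comul (Finsupp.sum c fun α a => a • Z α) from by
        rw [← Finsupp.linearCombination_apply, Z.linearCombination_repr]]
      rw [map_finsuppSum, map_finsuppSum]
      rw [Finsupp.sum_apply]
      simp only [map_smul, Finsupp.smul_apply, keyA, smul_eq_mul, mul_ite, mul_one, mul_zero]
      rw [Finsupp.sum_ite_eq c (β + γ) (fun _ a => a)]
      split_ifs with h
      · rfl
      · exact (Finsupp.notMem_support_iff.mp h).symm
    have hc : ∀ β γ : I →₀ ℕ, c (β + γ) =
        (if γ = 0 then c β else 0) + (if β = 0 then c γ else 0) := by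
      intro β γ
      have := congrArg (fun y => B.repr y (β, γ)) hx
      simp only [key, map_add] at this
      rw [this]
      simp only [Finsupp.add_apply, hB, Module.Basis.tensorProduct_repr_tmul_apply, Module.Basis.repr_self,
        Finsupp.single_apply]
      congr 1
      · split_ifs with h1 h2 h2
        · rw [one_smul]
        · exact absurd h1.symm h2
        · exact absurd h2.symm h1
        · rw [zero_smul]
      · split_ifs with h1 h2 h2
        · rw [smul_eq_mul, mul_one]
        · exact absurd h1.symm h2
        · exact absurd h2.symm h1
        · rw [smul_zero]
    have hc0 : c 0 = 0 := by
      have h00 := hc 0 0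
      simp only [add_zero, if_pos rfl] at h00
      exact left_eq_add.mp h00
    have hsupp : ∀ α ∈ c.support, ∃ i : I, α = Finsupp.single i 1 := by
      intro α hα
      by_contra hno
      push_neg at hno
      have hα0 : α ≠ 0 := by
        rintro rfl
        exact Finsupp.mem_support_iff.mp hα hc0
      obtain ⟨i, hi⟩ : ∃ i, α i ≠ 0 := by
        by_contra h
        push_neg at h
        exact hα0 (Finsupp.ext h)
      set β := Finsupp.single i 1 with hβ
      have hle : β ≤ α := Finsupp.single_le_iff.mpr (Nat.one_le_iff_ne_zero.mpr hi)
      have hadd : β + (α - β) = α := add_tsub_cancel_of_le hle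
      have hβ0 : β ≠ 0 := fun h => one_ne_zero (Finsupp.single_eq_zero.mp h)
      have hγ0 : α - β ≠ 0 := by
        intro h
        apply hno i
        rw [← hadd, h, add_zero]
      have := hc β (α - β)
      rw [hadd, if_neg hγ0, if_neg hβ0, add_zero] at this
      exact Finsupp.mem_support_iff.mp hα this
    have : x = Finsupp.sum c fun α a => a • Z α := by
      rw [← Finsupp.linearCombination_apply, Z.linearCombination_repr]
    rw [this]
    apply Submodule.sum_mem
    intro α hα
    obtain ⟨i, rfl⟩ := hsupp α hα
    exact Submodule.smul_mem _ _ (Submodule.subset_span ⟨i, rfl⟩)
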